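/- Let C ⊆ ℝ^n be a polyhedral cone of dimension k ≤ n spanned by integer vectors u_1, …, u_m with 0 ≤ Σ(u_j) ≤ a for all j, where Σ(v) denotes the sum of the coordinates of v. Then for every integer point z in the relative interior C⁰ of C, there exists an integer point z' ∈ C⁰ with Σ(z') ≤ k·a and z ∈ z' + C. -/

import Mathlib

open Finset Submodule Module

lemma cone_cara_aux (n m : ℕ) (v : Fin m → Fin n → ℝ) :
    ∀ s : ℕ, ∀ ν : Fin m → ℝ, (univ.filter fun j => ν j ≠ 0).card ≤ s → (∀ j, 0 ≤ ν j) →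
    ∃ ν' : Fin m → ℝ, (∀ j, 0 ≤ ν' j) ∧ (∑ j, ν' j • v j = ∑ j, ν j • v j) ∧
      (univ.filter fun j => ν' j ≠ 0).card ≤ finrank ℝ (span ℝ (Set.range v)) := by
  intro s
  induction s with
  | zero =>
    intro ν hcard _
    have hc0 : (univ.filter fun j => ν j ≠ 0) = ∅ := card_eq_zero.mp (Nat.le_zero.mp hcard)
    refine ⟨ν, fun j => ?_, rfl, by simp [hc0]⟩
    by_contra h
    have : j ∈ (univ.filter fun j => ν j ≠ 0) := mem_filter.mpr ⟨mem_univ _, fun hh => h (le_of_eq hh.symm)⟩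
    simp [hc0] at this
  | succ s ih =>
    intro ν hcard hν
    set S : Finset (Fin m) := univ.filter fun j => ν j ≠ 0 with hS
    by_cases hli : LinearIndependent ℝ (fun j : S => v j)
    · refine ⟨ν, hν, rfl, ?_⟩
      have h1 : finrank ℝ (span ℝ (Set.range fun j : S => v j)) = Fintype.card S :=
        finrank_span_eq_card hli
      have h2 : span ℝ (Set.range fun j : S => v j) ≤ span ℝ (Set.range v) := by
        apply span_mono
        rintro x ⟨j, rfl⟩
        exact ⟨j, rfl⟩
      calc S.card = Fintype.card S := (Fintype.card_coe S).symm
        _ ≤ finrank ℝ (span ℝ (Set.range v)) := h1 ▸ Submodule.finrank_mono h2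
    · obtain ⟨g, hgsum, i0, hgi0⟩ := Fintype.not_linearIndependent_iff.mp hli
      -- extend g to Fin m
      set G : Fin m → ℝ := fun j => if h : j ∈ S then g ⟨j, h⟩ else 0 with hG
      have hGsum : ∑ j, G j • v j = 0 := by
        rw [← Finset.sum_subset (subset_univ S) (by intro j _ hj; simp [hG, hj])]
        rw [← Finset.sum_attach S fun j => G j • v j]
        simpa [hG] using hgsum
      have hGS : ∀ j, j ∉ S → G j = 0 := fun j hj => by simp [hG, hj]
      have hGne : ∃ j, G j ≠ 0 := ⟨i0.1, by simpa [hG, i0.2] using hgi0⟩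
      -- wlog some coefficient positive
      obtain ⟨g', hg'sum, hg'S, j1, hj1⟩ :
          ∃ g' : Fin m → ℝ, ∑ j, g' j • v j = 0 ∧ (∀ j, j ∉ S → g' j = 0) ∧ ∃ j, 0 < g' j := by
        obtain ⟨j, hj⟩ := hGne
        rcases lt_or_gt_of_ne hj with h | h
        · exact ⟨-G, by simp [hGsum], fun j hj => by simp [hGS j hj], j, by simpa using h⟩
        · exact ⟨G, hGsum, hGS, j, h⟩
      set T : Finset (Fin m) := univ.filter fun j => 0 < g' j with hT
      have hTne : T.Nonempty := ⟨j1, by simp [hT, hj1]⟩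
      obtain ⟨j0, hj0T, hj0min⟩ := T.exists_min_image (fun j => ν j / g' j) hTne
      have hg'j0 : 0 < g' j0 := by simpa [hT] using hj0T
      set t : ℝ := ν j0 / g' j0 with ht
      have ht0 : 0 ≤ t := div_nonneg (hν j0) hg'j0.le
      set ν'' : Fin m → ℝ := fun j => ν j - t * g' j with hν''
      have hν''nonneg : ∀ j, 0 ≤ ν'' j := by
        intro j
        rcases le_or_gt (g' j) 0 with h | h
        · have : t * g' j ≤ 0 := mul_nonpos_of_nonneg_of_nonpos ht0 h
          simp only [hν'']; linarith [hν j]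
        · have := hj0min j (by simp [hT, h])
          have : t * g' j ≤ ν j := by
            rw [ht]
            calc ν j0 / g' j0 * g' j ≤ ν j / g' j * g' j := by
                  apply mul_le_mul_of_nonneg_right this h.le
              _ = ν j := div_mul_cancel₀ _ h.ne'
          simp only [hν'']; linarith
      have hν''j0 : ν'' j0 = 0 := by
        simp only [hν'', ht]
        field_simp
        ring
      have hsupp : (univ.filter fun j => ν'' j ≠ 0) ⊆ S.erase j0 := by
        intro j hj
        simp only [mem_filter] at hj
        refine mem_erase.mpr ⟨fun h => hj.2 (h ▸ hν''j0), ?_⟩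
        by_contra h
        exact hj.2 (by simp [hν'', hg'S j h, hS, not_not.mp (by simpa [hS] using h)])
      have hj0S : j0 ∈ S := by
        by_contra h
        exact absurd (hg'S j0 h) hg'j0.ne'
      have hcard'' : (univ.filter fun j => ν'' j ≠ 0).card ≤ s := by
        calc (univ.filter fun j => ν'' j ≠ 0).card ≤ (S.erase j0).card := card_le_card hsupp
          _ = S.card - 1 := card_erase_of_mem hj0S
          _ ≤ s := by omega
      obtain ⟨ν', h1, h2, h3⟩ := ih ν'' hcard'' hν''nonneg
      refine ⟨ν', h1, ?_, h3⟩
      rw [h2]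
      have : ∑ j, ν'' j • v j = ∑ j, ν j • v j - t • ∑ j, g' j • v j := by
        rw [Finset.smul_sum, ← Finset.sum_sub_distrib]
        congr 1; funext j
        simp only [hν'', sub_smul, smul_smul]
      rw [this, hg'sum, smul_zero, sub_zero]

lemma cone_cara (n m : ℕ) (v : Fin m → Fin n → ℝ) (ν : Fin m → ℝ) (hν : ∀ j, 0 ≤ ν j) :
    ∃ ν' : Fin m → ℝ, (∀ j, 0 ≤ ν' j) ∧ (∑ j, ν' j • v j = ∑ j, ν j • v j) ∧
      (univ.filter fun j => ν' j ≠ 0).card ≤ finrank ℝ (span ℝ (Set.range v)) :=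
  cone_cara_aux n m v _ ν le_rfl hν


/-- Let `C ⊆ ℝ^n` be a polyhedral cone of dimension `k ≤ n` spanned by integer
vectors `u_1, …, u_m` with `0 ≤ Σ(u_j) ≤ a` for all `j`.  Then for every integer point `z` in
the relative interior `C⁰` of `C` (the points expressible with all coefficients positive),
there is an integer point `z' ∈ C⁰` with `Σ(z') ≤ k·a` and `z ∈ z' + C`. -/
theorem stmt_4 (n m k : ℕ) (hk : k ≤ n) (a : ℤ) (u : Fin m → Fin n → ℤ)
    (hsum : ∀ j, 0 ≤ ∑ t, u j t ∧ ∑ t, u j t ≤ a)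
    (hdim : Module.finrank ℝ
      (Submodule.span ℝ (Set.range fun j => fun t => (u j t : ℝ))) = k)
    (z : Fin n → ℤ)
    (hz : ∃ lam : Fin m → ℝ, (∀ j, 0 < lam j) ∧
      (fun t => (z t : ℝ)) = ∑ j, lam j • fun t => (u j t : ℝ)) :
    ∃ z' : Fin n → ℤ,
      (∃ lam : Fin m → ℝ, (∀ j, 0 < lam j) ∧
        (fun t => (z' t : ℝ)) = ∑ j, lam j • fun t => (u j t : ℝ)) ∧
      (∑ t, z' t) ≤ (k : ℤ) * a ∧
      (∃ lam : Fin m → ℝ, (∀ j, 0 ≤ lam j) ∧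
        (fun t => ((z t - z' t : ℤ) : ℝ)) = ∑ j, lam j • fun t => (u j t : ℝ)) := by
  obtain ⟨lam, hlam, hzeq⟩ := hz
  set U : Fin m → Fin n → ℝ := fun j => fun t => (u j t : ℝ) with hU
  obtain ⟨ν, hν0, hνsum, hνcard⟩ := cone_cara n m U lam (fun j => (hlam j).le)
  rw [hdim] at hνcard
  set S : Finset (Fin m) := univ.filter fun j => ν j ≠ 0 with hS
  -- constants
  set A : ℝ := ((a ⊔ 0 : ℤ) : ℝ) with hA
  have hA0 : 0 ≤ A := by rw [hA]; exact_mod_cast (le_sup_right : (0:ℤ) ≤ a ⊔ 0)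
  set M : ℝ := (∑ j, lam j) * A with hM
  have hM0 : 0 ≤ M := mul_nonneg (Finset.sum_nonneg fun j _ => (hlam j).le) hA0
  set ε : ℝ := 1 / (M + 1) with hε
  have hε0 : 0 < ε := by positivity
  have hε1 : ε ≤ 1 := by rw [hε]; rw [div_le_one (by linarith)]; linarith
  have hεM : ε * M < 1 := by
    rw [hε, div_mul_eq_mul_div, div_lt_one (by linarith)]; linarith
  set coef : Fin m → ℝ := fun j => (1 - ε) * ν j + ε * lam j with hcoef
  have hcoefpos : ∀ j, 0 < coef j := fun j =>
    add_pos_of_nonneg_of_pos (mul_nonneg (by linarith) (hν0 j)) (mul_pos hε0 (hlam j))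
  set c : Fin m → ℤ := fun j => ⌈coef j⌉ - 1 with hc
  have hc0 : ∀ j, 0 ≤ c j := fun j => by
    have : 0 < ⌈coef j⌉ := Int.ceil_pos.mpr (hcoefpos j)
    simp only [hc]; omega
  set μ : Fin m → ℝ := fun j => coef j - c j with hμ
  have hμpos : ∀ j, 0 < μ j := fun j => by
    have := Int.ceil_lt_add_one (coef j)
    simp only [hμ, hc]; push_cast; linarith
  have hμle1 : ∀ j, μ j ≤ 1 := fun j => by
    have := Int.le_ceil (coef j)
    simp only [hμ, hc]; push_cast; linarith
  have hμlecoef : ∀ j, μ j ≤ coef j := fun j => by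
    have : (1 : ℤ) ≤ ⌈coef j⌉ := Int.ceil_pos.mpr (hcoefpos j)
    have : (1 : ℝ) ≤ (⌈coef j⌉ : ℝ) := by exact_mod_cast this
    simp only [hμ, hc]; push_cast; linarith
  -- z as coef-combination
  have hzcoef : (fun t => (z t : ℝ)) = ∑ j, coef j • U j := by
    have : ∑ j, coef j • U j
        = (1 - ε) • (∑ j, ν j • U j) + ε • (∑ j, lam j • U j) := by
      rw [Finset.smul_sum, Finset.smul_sum, ← Finset.sum_add_distrib]
      congr 1; funext j
      simp only [hcoef, add_smul, smul_smul]
    rw [this, hνsum, ← hzeq]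
    funext t; simp; ring
  -- define z'
  set z' : Fin n → ℤ := fun t => z t - ∑ j, c j * u j t with hz'
  have hz'real : (fun t => ((z' t : ℤ) : ℝ)) = ∑ j, μ j • U j := by
    funext t
    have h1 : (∑ j, coef j • U j) t = ∑ j, coef j * u j t := by
      rw [Finset.sum_apply]; rfl
    have h2 : (z t : ℝ) = ∑ j, coef j * u j t := by
      rw [← h1, ← hzcoef]
    rw [Finset.sum_apply]
    simp only [hz', Pi.smul_apply, smul_eq_mul, hμ, hU]
    push_cast
    rw [h2, ← Finset.sum_sub_distrib]
    exact Finset.sum_congr rfl fun j _ => by ring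
  refine ⟨z', ⟨μ, hμpos, hz'real⟩, ?_, ⟨fun j => (c j : ℝ), fun j => by show (0:ℝ) ≤ (c j : ℝ); exact_mod_cast hc0 j, ?_⟩⟩
  · -- the sum bound
    set s : Fin m → ℤ := fun j => ∑ t, u j t with hsj
    have hs0 : ∀ j, (0:ℝ) ≤ (s j : ℝ) := fun j => by exact_mod_cast (hsum j).1
    have hsA : ∀ j, (s j : ℝ) ≤ A := fun j => by
      have := (hsum j).2
      simp only [hA]; push_cast; exact le_trans (by exact_mod_cast this) (le_max_left _ _)
    have key : ((∑ t, z' t : ℤ) : ℝ) = ∑ j, μ j * (s j : ℝ) := by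
      push_cast
      have : ∀ t, ((z' t : ℤ) : ℝ) = ∑ j, μ j * (u j t : ℝ) := by
        intro t
        have := congrFun hz'real t
        rw [Finset.sum_apply] at this
        simpa using this
      rw [Finset.sum_congr rfl fun t _ => this t, Finset.sum_comm]
      apply Finset.sum_congr rfl
      intro j _
      rw [← Finset.mul_sum]
      simp [hsj]
    -- bound each term
    have hbound : ∑ j, μ j * (s j : ℝ) ≤ S.card * A + ε * M := by
      rw [← Finset.sum_filter_add_sum_filter_not univ (· ∈ S)]
      have hSeq : univ.filter (· ∈ S) = S := by
        ext j; simp [hS]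
      rw [hSeq]
      have hb1 : ∑ j ∈ S, μ j * (s j : ℝ) ≤ S.card * A := by
        calc ∑ j ∈ S, μ j * (s j : ℝ) ≤ ∑ j ∈ S, A := by
              apply Finset.sum_le_sum
              intro j _
              calc μ j * (s j : ℝ) ≤ 1 * (s j : ℝ) :=
                    mul_le_mul_of_nonneg_right (hμle1 j) (hs0 j)
                _ = (s j : ℝ) := one_mul _
                _ ≤ A := hsA j
          _ = S.card * A := by rw [Finset.sum_const, nsmul_eq_mul]
      have hb2 : ∑ j ∈ univ.filter (· ∉ S), μ j * (s j : ℝ) ≤ ε * M := by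
        have step : ∀ j ∈ univ.filter (· ∉ S), μ j * (s j : ℝ) ≤ ε * (lam j * A) := by
          intro j hj
          have hjS : j ∉ S := (mem_filter.mp hj).2
          have hνj : ν j = 0 := by
            by_contra h
            exact hjS (mem_filter.mpr ⟨mem_univ _, h⟩)
          have hμε : μ j ≤ ε * lam j := by
            have := hμlecoef j
            simp only [hcoef, hνj, mul_zero, zero_add] at this
            exact this
          calc μ j * (s j : ℝ) ≤ (ε * lam j) * (s j : ℝ) :=
                mul_le_mul_of_nonneg_right hμε (hs0 j)
            _ ≤ (ε * lam j) * A :=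
                mul_le_mul_of_nonneg_left (hsA j) (mul_nonneg hε0.le (hlam j).le)
            _ = ε * (lam j * A) := by ring
        calc ∑ j ∈ univ.filter (· ∉ S), μ j * (s j : ℝ)
            ≤ ∑ j ∈ univ.filter (· ∉ S), ε * (lam j * A) := Finset.sum_le_sum step
          _ ≤ ∑ j, ε * (lam j * A) := by
              apply Finset.sum_le_sum_of_subset_of_nonneg (Finset.filter_subset _ _)
              intro j _ _
              exact mul_nonneg hε0.le (mul_nonneg (hlam j).le hA0)
          _ = ε * M := by rw [hM, ← Finset.mul_sum, Finset.sum_mul]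
      linarith
    -- integer conclusion
    have hlt : ((∑ t, z' t : ℤ) : ℝ) < (((S.card : ℤ) * (a ⊔ 0) + 1 : ℤ) : ℝ) := by
      rw [key]
      have hcast : (((S.card : ℤ) * (a ⊔ 0) + 1 : ℤ) : ℝ) = S.card * A + 1 := by
        rw [hA]; push_cast; ring
      rw [hcast]
      linarith [hbound, hεM]
    have hle : (∑ t, z' t : ℤ) ≤ (S.card : ℤ) * (a ⊔ 0) := by
      have h : (∑ t, z' t : ℤ) < (S.card : ℤ) * (a ⊔ 0) + 1 := by exact_mod_cast hlt
      omega
    have hcardk : (S.card : ℤ) ≤ (k : ℤ) := by exact_mod_cast hνcard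
    rcases Nat.eq_zero_or_pos m with hm | hm
    · -- m = 0 : k = 0
      have hk0 : k = 0 := by
        subst hm
        rw [← hdim]
        have : (Set.range fun j : Fin 0 => fun t => (u j t : ℝ)) = ∅ :=
          Set.range_eq_empty _
        rw [this, span_empty, finrank_bot]
      have hScard0 : S.card = 0 := by
        have := hνcard; omega
      rw [hk0]
      simpa [hScard0] using hle
    · have ha0 : 0 ≤ a := le_trans (hsum ⟨0, hm⟩).1 (hsum ⟨0, hm⟩).2
      have : a ⊔ 0 = a := sup_eq_left.mpr ha0
      rw [this] at hle
      calc (∑ t, z' t : ℤ) ≤ (S.card : ℤ) * a := hle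
        _ ≤ (k : ℤ) * a := mul_le_mul_of_nonneg_right hcardk ha0
  · -- z - z' = ∑ c j u j
    funext t
    rw [Finset.sum_apply]
    simp only [hz', Pi.smul_apply, smul_eq_mul, hU]
    push_cast
    ring
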